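/- Let k be an algebraically closed field of characteristic 2, ζ ∈ k a primitive cube root of unity, and n ≥ 1 an integer. Let H = ⟨σ, τ⟩ be a Klein four group. Then the 2n-dimensional representation of H over k given in block form by σ ↦ [[I_n, ζ(I_n + J_n(1))], [0, I_n]] and τ ↦ [[I_n, ζ²I_n + J_n(1)], [0, I_n]] is isomorphic to the representation given by σ ↦ [[I_n, J_n(0)], [0, I_n]] and τ ↦ [[I_n, I_n], [0, I_n]]. -/

import Mathlib

/-- The `n × n` upper-triangular Jordan block over `k` with eigenvalue `lam`. -/
def jordanBlock (k : Type) [Field k] (n : ℕ) (lam : k) : Matrix (Fin n) (Fin n) k :=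
  Matrix.of fun i j => if i = j then lam else if (i : ℕ) + 1 = (j : ℕ) then 1 else 0

section Stmt11Aux

variable {k : Type} [Field k] {n : ℕ} (ζ : k)

/-- `N`, the nilpotent Jordan block. -/
private def Nmat (k : Type) [Field k] (n : ℕ) : Matrix (Fin n) (Fin n) k := jordanBlock k n 0

private lemma Nmat_apply (i j : Fin n) :
    Nmat k n i j = if (i : ℕ) + 1 = (j : ℕ) then 1 else 0 := by
  simp only [Nmat, jordanBlock, Matrix.of_apply]
  rcases eq_or_ne i j with rfl | h
  · rw [if_pos rfl, if_neg (by omega)]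
  · rw [if_neg h]

private lemma Nmat_mul (X : Matrix (Fin n) (Fin n) k) (i j : Fin n) :
    (Nmat k n * X) i j = if h : (i : ℕ) + 1 < n then X ⟨(i : ℕ) + 1, h⟩ j else 0 := by
  rw [Matrix.mul_apply]
  split
  · next h =>
    rw [Finset.sum_eq_single (⟨(i : ℕ) + 1, h⟩ : Fin n)]
    · rw [Nmat_apply, if_pos rfl, one_mul]
    · intro b _ hb
      rw [Nmat_apply, if_neg, zero_mul]
      intro hc
      exact hb (Fin.ext hc.symm)
    · intro hmem; exact absurd (Finset.mem_univ _) hmem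
  · next h =>
    apply Finset.sum_eq_zero
    intro b _
    rw [Nmat_apply, if_neg (by omega), zero_mul]

private lemma mul_Nmat (X : Matrix (Fin n) (Fin n) k) (i j : Fin n) :
    (X * Nmat k n) i j = if h : 0 < (j : ℕ) then
      X i ⟨(j : ℕ) - 1, lt_of_le_of_lt (Nat.sub_le _ _) j.isLt⟩ else 0 := by
  rw [Matrix.mul_apply]
  split
  · next h =>
    rw [Finset.sum_eq_single (⟨(j : ℕ) - 1, lt_of_le_of_lt (Nat.sub_le _ _) j.isLt⟩ : Fin n)]
    · rw [Nmat_apply, if_pos (by simp; omega), mul_one]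
    · intro b _ hb
      rw [Nmat_apply, if_neg, mul_zero]
      intro hc
      apply hb
      apply Fin.ext
      simp only []
      omega
    · intro hmem; exact absurd (Finset.mem_univ _) hmem
  · next h =>
    apply Finset.sum_eq_zero
    intro b _
    rw [Nmat_apply, if_neg (by omega), mul_zero]

/-- `S = (1 + ζ²N)⁻¹`, given explicitly. -/
private def Smat (k : Type) [Field k] (n : ℕ) (ζ : k) : Matrix (Fin n) (Fin n) k :=
  Matrix.of fun a b => if (a : ℕ) ≤ (b : ℕ) then ζ ^ (2 * ((b : ℕ) - (a : ℕ))) else 0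

/-- `M = N S`. -/
private def Mmat (k : Type) [Field k] (n : ℕ) (ζ : k) : Matrix (Fin n) (Fin n) k :=
  Nmat k n * Smat k n ζ

private lemma Mmat_apply (i j : Fin n) :
    Mmat k n ζ i j = if (i : ℕ) + 1 ≤ (j : ℕ) then ζ ^ (2 * ((j : ℕ) - (i : ℕ) - 1)) else 0 := by
  rw [Mmat, Nmat_mul]
  split
  · next h =>
    simp only [Smat, Matrix.of_apply]
    rcases le_or_gt ((i : ℕ) + 1) (j : ℕ) with hle | hlt
    · rw [if_pos hle, if_pos hle]
      exact congrArg (fun e => ζ ^ e) (by omega)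
    · rw [if_neg (by omega), if_neg (by omega)]
  · next h =>
    rw [if_neg (by omega)]

private lemma Mmat_pow (p : ℕ) (i j : Fin n) :
    (((j : ℕ) < (i : ℕ) + p → (Mmat k n ζ ^ p) i j = 0) ∧
      ((i : ℕ) + p = (j : ℕ) → (Mmat k n ζ ^ p) i j = 1)) := by
  induction p generalizing i j with
  | zero =>
    constructor
    · intro hlt
      rw [pow_zero, Matrix.one_apply, if_neg]
      intro hc; apply absurd (congrArg (Fin.val) hc); omega
    · intro heq
      rw [pow_zero, Matrix.one_apply, if_pos (Fin.ext (by omega))]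
  | succ p ih =>
    rw [pow_succ']
    constructor
    · intro hlt
      rw [Matrix.mul_apply]
      apply Finset.sum_eq_zero
      intro l _
      rcases le_or_gt (l : ℕ) (i : ℕ) with hle | hgt
      · rw [Mmat_apply, if_neg (by omega), zero_mul]
      · rw [(ih l j).1 (by omega), mul_zero]
    · intro heq
      have hlt : (i : ℕ) + 1 < n := by omega
      rw [Matrix.mul_apply, Finset.sum_eq_single (⟨(i : ℕ) + 1, hlt⟩ : Fin n)]
      · rw [Mmat_apply, if_pos (by simp), (ih _ j).2 (by simp; omega)]
        simp
      · intro b _ hb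
        rcases le_or_gt (b : ℕ) (i : ℕ) with hle | hgt
        · rw [Mmat_apply, if_neg (by omega), zero_mul]
        · have hbne : (b : ℕ) ≠ (i : ℕ) + 1 := by
            intro hc; exact hb (Fin.ext hc)
          rw [(ih b j).1 (by omega), mul_zero]
      · intro hmem; exact absurd (Finset.mem_univ _) hmem

private lemma Mmat_pow_n : Mmat k n ζ ^ n = 0 := by
  ext i j
  rw [(Mmat_pow ζ n i j).1 (by omega)]
  simp

variable (hn : 0 < n)

/-- The conjugating matrix `Q` whose columns are `M^(n-1-j) e_{n-1}`. -/
private def Qmat (k : Type) [Field k] (n : ℕ) (ζ : k) (hn : 0 < n) : Matrix (Fin n) (Fin n) k :=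
  Matrix.of fun i j => (Mmat k n ζ ^ (n - 1 - (j : ℕ))) i ⟨n - 1, Nat.sub_lt hn one_pos⟩

private lemma Qmat_triangular : (Qmat k n ζ hn).BlockTriangular id := by
  intro i j hij
  simp only [id_eq] at hij
  exact (Mmat_pow ζ _ i _).1 (by simp; omega)

private lemma Qmat_det : (Qmat k n ζ hn).det = 1 := by
  rw [Matrix.det_of_upperTriangular (Qmat_triangular ζ hn)]
  apply Finset.prod_eq_one
  intro i _
  exact (Mmat_pow ζ _ i _).2 (by simp; omega)

private lemma Mmat_mul_Qmat :
    Mmat k n ζ * Qmat k n ζ hn = Qmat k n ζ hn * Nmat k n := by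
  ext i j
  have hL : (Mmat k n ζ * Qmat k n ζ hn) i j
      = (Mmat k n ζ ^ (n - 1 - (j : ℕ) + 1)) i ⟨n - 1, Nat.sub_lt hn one_pos⟩ := by
    rw [pow_succ', Matrix.mul_apply, Matrix.mul_apply]
    rfl
  rw [hL, mul_Nmat]
  split
  · next h =>
    have hj : (j : ℕ) < n := j.isLt
    simp only [Qmat, Matrix.of_apply, Fin.val_mk]
    have he : n - 1 - ((j : ℕ) - 1) = n - 1 - (j : ℕ) + 1 := by omega
    rw [he]
  · next h =>
    have : n - 1 - (j : ℕ) + 1 = n := by omega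
    rw [this, Mmat_pow_n]
    simp

end Stmt11Aux

/-- **Lemma.** For the Klein four group `H = ⟨σ, τ⟩` over an algebraically closed field
`k` of characteristic 2 with primitive cube root of unity `ζ`, the representation given
by `σ ↦ [[I, ζ(I + Jₙ(1))], [0, I]]`, `τ ↦ [[I, ζ²I + Jₙ(1)], [0, I]]` is isomorphic to
the one given by `σ ↦ [[I, Jₙ(0)], [0, I]]`, `τ ↦ [[I, I], [0, I]]`. -/
theorem stmt_11 (k : Type) [Field k] [IsAlgClosed k] [CharP k 2]
    (ζ : k) (hζ : IsPrimitiveRoot ζ 3)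
    (n : ℕ) (hn : 1 ≤ n)
    (H : Type) [Group H] (σ τ : H)
    (hσ1 : σ ≠ 1) (hτ1 : τ ≠ 1) (hστ : σ ≠ τ)
    (hσ : σ ^ 2 = 1) (hτ : τ ^ 2 = 1) (hcomm : σ * τ = τ * σ)
    (hgen : Subgroup.closure {σ, τ} = (⊤ : Subgroup H))
    (V W : H →* Matrix.GeneralLinearGroup (Fin n ⊕ Fin n) k)
    (hVσ : (V σ : Matrix (Fin n ⊕ Fin n) (Fin n ⊕ Fin n) k) =
      Matrix.fromBlocks 1 (ζ • (1 + jordanBlock k n 1)) 0 1)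
    (hVτ : (V τ : Matrix (Fin n ⊕ Fin n) (Fin n ⊕ Fin n) k) =
      Matrix.fromBlocks 1 (ζ ^ 2 • (1 : Matrix (Fin n) (Fin n) k) + jordanBlock k n 1) 0 1)
    (hWσ : (W σ : Matrix (Fin n ⊕ Fin n) (Fin n ⊕ Fin n) k) =
      Matrix.fromBlocks 1 (jordanBlock k n 0) 0 1)
    (hWτ : (W τ : Matrix (Fin n ⊕ Fin n) (Fin n ⊕ Fin n) k) =
      Matrix.fromBlocks 1 1 0 1) :
    ∃ P : Matrix.GeneralLinearGroup (Fin n ⊕ Fin n) k,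
      ∀ h : H, P * V h * P⁻¹ = W h := by
  classical
  -- facts about ζ and char 2
  have hz3 : ζ ^ 3 = 1 := hζ.pow_eq_one
  have h2 : (2 : k) = 0 := by exact_mod_cast CharP.cast_eq_zero k 2
  have hadd : ∀ x : k, x + x = 0 := fun x => by
    have : x + x = 2 * x := by ring
    rw [this, h2, zero_mul]
  have hne1 : ζ ≠ 1 := hζ.ne_one (by norm_num)
  have hsum : ζ ^ 2 + ζ + 1 = 0 := by
    have hfac : (ζ - 1) * (ζ ^ 2 + ζ + 1) = 0 := by linear_combination hz3
    rcases mul_eq_zero.mp hfac with h | h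
    · exact absurd (sub_eq_zero.mp h) hne1
    · exact h
  set N : Matrix (Fin n) (Fin n) k := Nmat k n with hN
  set S : Matrix (Fin n) (Fin n) k := Smat k n ζ with hS
  set M : Matrix (Fin n) (Fin n) k := Mmat k n ζ with hM
  set Q : Matrix (Fin n) (Fin n) k := Qmat k n ζ hn with hQ
  -- S is a two-sided inverse of (1 + ζ² • N)
  have hSapp : ∀ a b : Fin n, S a b = if (a : ℕ) ≤ (b : ℕ) then ζ ^ (2 * ((b : ℕ) - (a : ℕ))) else 0 := by
    intro a b; rfl
  have hSr : (1 + ζ ^ 2 • N) * S = 1 := by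
    ext i j
    have hL : ((1 + ζ ^ 2 • N) * S) i j = S i j + ζ ^ 2 * ((Nmat k n * S) i j) := by
      rw [add_mul, one_mul, Matrix.smul_mul, Matrix.add_apply, Matrix.smul_apply, hN,
        smul_eq_mul]
    rw [hL, Nmat_mul]
    rcases lt_trichotomy (i : ℕ) (j : ℕ) with hlt | heq | hgt
    · have h1 : (i : ℕ) + 1 < n := lt_of_le_of_lt hlt j.isLt
      have hne : i ≠ j := by intro hc; subst hc; omega
      rw [dif_pos h1, Matrix.one_apply_ne hne, hSapp, hSapp, if_pos (by omega),
        if_pos (by simp only [Fin.val_mk]; omega)]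
      have he : ζ ^ 2 * ζ ^ (2 * ((j : ℕ) - ((i : ℕ) + 1))) = ζ ^ (2 * ((j : ℕ) - (i : ℕ))) := by
        rw [← pow_add]; congr 1; omega
      simp only [Fin.val_mk]
      rw [he]
      exact hadd _
    · have heq' : i = j := Fin.ext heq
      subst heq'
      rw [Matrix.one_apply_eq, hSapp, if_pos le_rfl, Nat.sub_self, mul_zero, pow_zero]
      split
      · next h1 =>
        rw [hSapp, if_neg (by simp only [Fin.val_mk]; omega), mul_zero, add_zero]
      · rw [mul_zero, add_zero]
    · have hne : i ≠ j := by intro hc; subst hc; omega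
      rw [Matrix.one_apply_ne hne, hSapp, if_neg (by omega)]
      split
      · next h1 =>
        rw [hSapp, if_neg (by simp only [Fin.val_mk]; omega), mul_zero, add_zero]
      · rw [mul_zero, add_zero]
  have hSl : S * (1 + ζ ^ 2 • N) = 1 := by
    ext i j
    have hL : (S * (1 + ζ ^ 2 • N)) i j = S i j + ζ ^ 2 * ((S * Nmat k n) i j) := by
      rw [mul_add, mul_one, Matrix.mul_smul, Matrix.add_apply, Matrix.smul_apply, hN,
        smul_eq_mul]
    rw [hL, mul_Nmat]
    rcases lt_trichotomy (i : ℕ) (j : ℕ) with hlt | heq | hgt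
    · have h1 : 0 < (j : ℕ) := by omega
      have hne : i ≠ j := by intro hc; subst hc; omega
      rw [dif_pos h1, Matrix.one_apply_ne hne, hSapp, hSapp, if_pos (by omega),
        if_pos (by simp only [Fin.val_mk]; omega)]
      have he : ζ ^ 2 * ζ ^ (2 * ((j : ℕ) - 1 - (i : ℕ))) = ζ ^ (2 * ((j : ℕ) - (i : ℕ))) := by
        rw [← pow_add]; congr 1; omega
      simp only [Fin.val_mk]
      rw [he]
      exact hadd _
    · have heq' : i = j := Fin.ext heq
      subst heq'
      rw [Matrix.one_apply_eq, hSapp, if_pos le_rfl, Nat.sub_self, mul_zero, pow_zero]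
      split
      · next h1 =>
        rw [hSapp, if_neg (by simp only [Fin.val_mk]; omega), mul_zero, add_zero]
      · rw [mul_zero, add_zero]
    · have hne : i ≠ j := by intro hc; subst hc; omega
      rw [Matrix.one_apply_ne hne, hSapp, if_neg (by omega)]
      split
      · next h1 =>
        rw [hSapp, if_neg (by simp only [Fin.val_mk]; omega), mul_zero, add_zero]
      · rw [mul_zero, add_zero]
  -- factorization ζ•1 + N = ζ•(1 + ζ²•N)
  have hz3' : ζ * ζ ^ 2 = 1 := by linear_combination hz3
  have hfacz : ζ • (1 : Matrix (Fin n) (Fin n) k) + N = ζ • (1 + ζ ^ 2 • N) := by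
    rw [smul_add, smul_smul, hz3', one_smul]
  -- M * (ζ•1 + N) = ζ • N
  have hMz : M * (ζ • (1 : Matrix (Fin n) (Fin n) k) + N) = ζ • N := by
    rw [hfacz, Matrix.mul_smul, hM, Mmat, hS.symm, hN.symm, Matrix.mul_assoc, hSl, mul_one]
  -- Q is invertible
  haveI invQ : Invertible Q := Q.invertibleOfIsUnitDet (by rw [hQ, Qmat_det]; exact isUnit_one)
  have hMQ : M * Q = Q * N := by rw [hM, hQ, hN]; exact Mmat_mul_Qmat ζ hn
  set A : Matrix (Fin n) (Fin n) k := ⅟Q with hA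
  have hAM : A * M = N * A := by
    have h1 : A * (M * Q) * A = A * (Q * N) * A := by rw [hMQ]
    calc A * M = A * M * (Q * A) := by rw [hA, mul_invOf_self, mul_one]
    _ = A * (M * Q) * A := by rw [Matrix.mul_assoc, Matrix.mul_assoc, Matrix.mul_assoc]
    _ = A * (Q * N) * A := h1
    _ = (A * Q) * (N * A) := by rw [Matrix.mul_assoc, Matrix.mul_assoc, Matrix.mul_assoc]
    _ = N * A := by rw [hA, invOf_mul_self, Matrix.one_mul]
  set B : Matrix (Fin n) (Fin n) k := A * (ζ • (1 : Matrix (Fin n) (Fin n) k) + N) with hB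
  -- key intertwining identities
  have cond_sigma : A * (ζ • N) = N * B := by
    rw [hB, ← Matrix.mul_assoc, ← hAM, Matrix.mul_assoc, hMz]
  -- invertibility of the pieces
  haveI invZN : Invertible (ζ • (1 : Matrix (Fin n) (Fin n) k) + N) := by
    refine ⟨ζ ^ 2 • S, ?_, ?_⟩
    · rw [hfacz, Matrix.smul_mul, Matrix.mul_smul, smul_smul, mul_comm (ζ^2) ζ, hz3', one_smul, hSl]
    · rw [hfacz, Matrix.smul_mul, Matrix.mul_smul, smul_smul, hz3', one_smul, hSr]
  haveI invB : Invertible B := invertibleMul A _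
  -- the conjugating matrix P
  set Pv : Matrix (Fin n ⊕ Fin n) (Fin n ⊕ Fin n) k := Matrix.fromBlocks A 0 0 B with hPv
  set Pinv : Matrix (Fin n ⊕ Fin n) (Fin n ⊕ Fin n) k := Matrix.fromBlocks Q 0 0 (⅟B) with hPinv
  have hPP : Pv * Pinv = 1 := by
    rw [hPv, hPinv, Matrix.fromBlocks_multiply]
    simp only [Matrix.mul_zero, Matrix.zero_mul, add_zero, zero_add]
    rw [hA, invOf_mul_self, mul_invOf_self, Matrix.fromBlocks_one]
  have hPP' : Pinv * Pv = 1 := by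
    rw [hPv, hPinv, Matrix.fromBlocks_multiply]
    simp only [Matrix.mul_zero, Matrix.zero_mul, add_zero, zero_add]
    rw [hA, mul_invOf_self, invOf_mul_self, Matrix.fromBlocks_one]
  set P : Matrix.GeneralLinearGroup (Fin n ⊕ Fin n) k := ⟨Pv, Pinv, hPP, hPP'⟩ with hP
  -- char-2 identities for the Jordan blocks
  have hJ1 : (1 : Matrix (Fin n) (Fin n) k) + jordanBlock k n 1 = N := by
    ext i j
    rw [Matrix.add_apply, Matrix.one_apply, hN, Nmat_apply]
    simp only [jordanBlock, Matrix.of_apply]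
    rcases eq_or_ne i j with rfl | h
    · rw [if_pos rfl, if_pos rfl, if_neg (by omega), hadd]
    · rw [if_neg h, if_neg h, zero_add]
  have hz21 : ζ ^ 2 + 1 = ζ := by linear_combination hsum - hadd ζ
  have hJτ : ζ ^ 2 • (1 : Matrix (Fin n) (Fin n) k) + jordanBlock k n 1
      = ζ • (1 : Matrix (Fin n) (Fin n) k) + N := by
    ext i j
    rw [Matrix.add_apply, Matrix.add_apply, Matrix.smul_apply, Matrix.smul_apply,
      Matrix.one_apply, hN, Nmat_apply]
    simp only [jordanBlock, Matrix.of_apply, smul_eq_mul]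
    rcases eq_or_ne i j with rfl | h
    · rw [if_pos rfl, if_pos rfl, if_neg (by omega), mul_one, mul_one, add_zero, hz21]
    · simp only [if_neg h, mul_zero, zero_add]
  -- matrix-level intertwining for σ and τ
  have hPσ : Pv * (V σ : Matrix (Fin n ⊕ Fin n) (Fin n ⊕ Fin n) k)
      = (W σ : Matrix (Fin n ⊕ Fin n) (Fin n ⊕ Fin n) k) * Pv := by
    have hN0 : jordanBlock k n 0 = N := rfl
    rw [hVσ, hWσ, hJ1, hN0, hPv, Matrix.fromBlocks_multiply, Matrix.fromBlocks_multiply]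
    simp only [Matrix.mul_zero, Matrix.zero_mul, Matrix.mul_one, Matrix.one_mul,
      add_zero, zero_add]
    rw [cond_sigma]
  have hPτ : Pv * (V τ : Matrix (Fin n ⊕ Fin n) (Fin n ⊕ Fin n) k)
      = (W τ : Matrix (Fin n ⊕ Fin n) (Fin n ⊕ Fin n) k) * Pv := by
    rw [hVτ, hWτ, hJτ, hPv, Matrix.fromBlocks_multiply, Matrix.fromBlocks_multiply]
    simp only [Matrix.mul_zero, Matrix.zero_mul, Matrix.mul_one, Matrix.one_mul,
      add_zero, zero_add]
    rw [hB]
  -- lift to the group level and use closure induction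
  refine ⟨P, ?_⟩
  have key : ∀ h : H, P * V h = W h * P := by
    intro h
    have hh : h ∈ Subgroup.closure ({σ, τ} : Set H) := by
      rw [hgen]; exact Subgroup.mem_top h
    refine Subgroup.closure_induction (p := fun x _ => P * V x = W x * P) ?_ ?_ ?_ ?_ hh
    · intro x hx
      rcases hx with rfl | rfl
      · exact Units.ext (by simpa using hPσ)
      · exact Units.ext (by simpa using hPτ)
    · show P * V 1 = W 1 * P
      rw [map_one, map_one, mul_one, one_mul]
    · intro x y _ _ hx hy
      show P * V (x * y) = W (x * y) * P
      rw [map_mul, map_mul, ← mul_assoc, hx, mul_assoc, hy, ← mul_assoc]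
    · intro x _ hx
      show P * V x⁻¹ = W x⁻¹ * P
      rw [map_inv, map_inv, mul_inv_eq_iff_eq_mul, mul_assoc, hx, ← mul_assoc,
        inv_mul_cancel, one_mul]
  intro h
  rw [key h, mul_inv_cancel_right]
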